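/- Fix t > 0 and let J_t be the closed ideal of AAP(ℝ) generated by the functions e^{iλx} − e^{iλe^t x}, λ > 0. Then J_t equals the ideal I_0 = {f ∈ AAP(ℝ) : f(0) = 0 and x_∞(f) = 0}. -/

import Mathlib

set_option synthInstance.maxHeartbeats 1000000

open BoundedContinuousFunction Filter

/-- The exponential `x ↦ e^{iλx}` as a bounded continuous function on `ℝ`. -/
noncomputable def expB (l : ℝ) : BoundedContinuousFunction ℝ ℂ :=
  BoundedContinuousFunction.ofNormedAddCommGroup
    (fun x : ℝ => Complex.exp (Complex.I * l * x))
    (by fun_prop) 1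
    (by
      intro x
      rw [Complex.norm_exp]
      simp [Complex.mul_re])

/-- `AAP(ℝ)` as a closed subalgebra of the bounded continuous functions: the uniform closure
of the algebra generated by the exponentials `e^{iλx}`, `λ ≥ 0`. -/
noncomputable def AAPalg : Subalgebra ℂ (BoundedContinuousFunction ℝ ℂ) :=
  (Algebra.adjoin ℂ (expB '' {l : ℝ | 0 ≤ l})).topologicalClosure

set_option maxHeartbeats 1000000

lemma expB_apply (l x : ℝ) : expB l x = Complex.exp (Complex.I * l * x) := rfl

lemma norm_expB_le (l : ℝ) : ‖expB l‖ ≤ 1 :=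
  BoundedContinuousFunction.norm_ofNormedAddCommGroup_le _ zero_le_one _

lemma expB_add (a b : ℝ) : expB (a + b) = expB a * expB b := by
  ext x
  simp [expB_apply, ← Complex.exp_add]
  ring_nf

lemma expB_zero : expB 0 = 1 := by
  ext x; simp [expB_apply]

lemma expB_apply_zero (l : ℝ) : expB l 0 = 1 := by simp [expB_apply]
noncomputable def A (T : ℝ) (u : BoundedContinuousFunction ℝ ℂ) : ℂ :=
  (1 / (2 * T) : ℂ) * ∫ x in (-T)..T, u x

lemma A_add (T : ℝ) (u v : BoundedContinuousFunction ℝ ℂ) : A T (u + v) = A T u + A T v := by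
  unfold A
  rw [← mul_add, ← intervalIntegral.integral_add (u.continuous.intervalIntegrable _ _)
    (v.continuous.intervalIntegrable _ _)]
  simp

lemma A_smul (T : ℝ) (c : ℂ) (u : BoundedContinuousFunction ℝ ℂ) : A T (c • u) = c * A T u := by
  unfold A
  rw [show (fun x => (c • u) x) = fun x => c • (u x) from rfl]
  rw [intervalIntegral.integral_smul]
  simp; ring

lemma A_one {T : ℝ} (hT : T ≠ 0) : A T 1 = 1 := by
  unfold A
  simp only [BoundedContinuousFunction.coe_one, Pi.one_apply]
  rw [intervalIntegral.integral_const]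
  have : ((2:ℂ)*T) ≠ 0 := by
    simp [Complex.ofReal_ne_zero, hT]
  simp only [Complex.real_smul, mul_one]
  push_cast
  have hT' : (T:ℂ) ≠ 0 := by exact_mod_cast hT
  field_simp
  ring

lemma norm_A_le {T : ℝ} (hT : 0 < T) (u : BoundedContinuousFunction ℝ ℂ) : ‖A T u‖ ≤ ‖u‖ := by
  unfold A
  rw [norm_mul]
  have h1 : ‖∫ x in (-T)..T, u x‖ ≤ ‖u‖ * |T - (-T)| :=
    intervalIntegral.norm_integral_le_of_norm_le_const (fun x _ => u.norm_coe_le_norm x)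
  have h2 : ‖(1 / (2 * T) : ℂ)‖ = 1 / (2 * T) := by
    rw [norm_div, norm_one]
    congr 1
    rw [norm_mul, Complex.norm_two, Complex.norm_real, Real.norm_eq_abs, abs_of_pos hT]
  rw [h2]
  have : |T - (-T)| = 2 * T := by rw [abs_of_pos (by linarith)]; ring
  rw [this] at h1
  calc 1 / (2*T) * ‖∫ x in (-T)..T, u x‖ ≤ 1 / (2*T) * (‖u‖ * (2*T)) := by
        apply mul_le_mul_of_nonneg_left h1 (by positivity)
    _ = ‖u‖ := by field_simp

lemma tendsto_A_expB {l : ℝ} (hl : 0 < l) :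
    Tendsto (fun T => A T (expB l)) atTop (nhds 0) := by
  refine squeeze_zero_norm' (a := fun T => 1 / (l * T)) ?_ ?_
  · filter_upwards [eventually_gt_atTop 0] with T hT
    unfold A
    have hc : (Complex.I * l) ≠ 0 := by
      simp [Complex.I_ne_zero, Complex.ofReal_ne_zero, ne_of_gt hl]
    have key : (∫ x in (-T)..T, expB l x) =
        (Complex.exp (Complex.I * l * T) - Complex.exp (Complex.I * l * ((-T : ℝ) : ℂ))) /
          (Complex.I * l) := by
      simp only [expB_apply]
      exact integral_exp_mul_complex hc
    rw [key, norm_mul]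
    have he : ∀ s : ℝ, ‖Complex.exp (Complex.I * l * (s : ℂ))‖ = 1 := by
      intro s
      rw [Complex.norm_exp]
      simp [Complex.mul_re]
    have h1 : ‖Complex.exp (Complex.I * l * (T : ℂ)) -
        Complex.exp (Complex.I * l * ((-T : ℝ) : ℂ))‖ ≤ 2 := by
      calc _ ≤ ‖Complex.exp (Complex.I * ↑l * (T:ℂ))‖ +
            ‖Complex.exp (Complex.I * ↑l * ((-T : ℝ):ℂ))‖ := norm_sub_le _ _
        _ ≤ 2 := by rw [he T, he (-T)]; norm_num
    have h2 : ‖(Complex.I * l)‖ = l := by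
      rw [norm_mul, Complex.norm_I, Complex.norm_real, Real.norm_eq_abs,
        one_mul, abs_of_pos hl]
    have h3 : ‖(1 / (2 * T) : ℂ)‖ = 1 / (2 * T) := by
      rw [norm_div, norm_one]
      congr 1
      rw [norm_mul, Complex.norm_two, Complex.norm_real, Real.norm_eq_abs, abs_of_pos hT]
    rw [h3, norm_div, h2]
    calc 1 / (2*T) * (‖_‖ / l) ≤ 1 / (2*T) * (2 / l) := by gcongr
      _ = 1 / (l * T) := by field_simp
  · rw [show (fun T => 1 / (l * T)) = (fun y => 1 / y) ∘ (fun T => l * T) from rfl]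
    apply Tendsto.comp _ (tendsto_id.const_mul_atTop hl)
    simpa using tendsto_inv_atTop_zero

lemma A_sub (T : ℝ) (u v : BoundedContinuousFunction ℝ ℂ) : A T (u - v) = A T u - A T v := by
  have := A_add T (u - v) v
  simp at this
  rw [this]; ring

noncomputable def Wset : Set (BoundedContinuousFunction ℝ ℂ) := {u | ∃ l : ℝ, 0 < l ∧ u = expB l}

lemma span_W_tendsto {u : BoundedContinuousFunction ℝ ℂ}
    (hu : u ∈ Submodule.span ℂ Wset) : Tendsto (fun T => A T u) atTop (nhds 0) := by
  induction hu using Submodule.span_induction with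
  | mem x hx =>
    obtain ⟨l, hl, rfl⟩ := hx
    exact tendsto_A_expB hl
  | zero =>
    have : ∀ T : ℝ, A T 0 = 0 := by intro T; unfold A; simp
    simpa [this] using tendsto_const_nhds
  | add x y _ _ hx hy =>
    have : ∀ T : ℝ, A T (x + y) = A T x + A T y := fun T => A_add T x y
    simpa [this] using hx.add hy
  | smul c x _ hx =>
    have : ∀ T : ℝ, A T (c • x) = c * A T x := fun T => A_smul T c x
    simpa [this] using hx.const_mul c

lemma closure_W_tendsto {u : BoundedContinuousFunction ℝ ℂ}
    (hu : u ∈ closure ((Submodule.span ℂ Wset : Submodule ℂ _) : Set (BoundedContinuousFunction ℝ ℂ))) :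
    Tendsto (fun T => A T u) atTop (nhds 0) := by
  rw [NormedAddCommGroup.tendsto_nhds_zero]
  intro ε hε
  obtain ⟨v, hv, hdist⟩ := Metric.mem_closure_iff.1 hu (ε / 2) (by linarith)
  have hvt := span_W_tendsto hv
  rw [NormedAddCommGroup.tendsto_nhds_zero] at hvt
  filter_upwards [hvt (ε / 2) (by linarith), eventually_gt_atTop 0] with T h1 h2
  have : A T u = A T (u - v) + A T v := by rw [A_sub]; ring
  rw [this]
  calc ‖A T (u - v) + A T v‖ ≤ ‖A T (u - v)‖ + ‖A T v‖ := norm_add_le _ _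
    _ ≤ ‖u - v‖ + ‖A T v‖ := by gcongr; exact norm_A_le h2 _
    _ < ε / 2 + ε / 2 := by rw [← dist_eq_norm]; gcongr
    _ = ε := by ring

noncomputable def Eset : Set (BoundedContinuousFunction ℝ ℂ) := expB '' {l : ℝ | 0 ≤ l}

noncomputable def Emon : Submonoid (BoundedContinuousFunction ℝ ℂ) where
  carrier := Eset
  mul_mem' := by
    rintro _ _ ⟨a, ha, rfl⟩ ⟨b, hb, rfl⟩
    exact ⟨a + b, show 0 ≤ a + b from add_nonneg (by simpa using ha) (by simpa using hb), (expB_add a b).symm ▸ rfl⟩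
  one_mem' := ⟨0, by simp, expB_zero⟩

lemma adjoin_eq_span' :
    Subalgebra.toSubmodule (Algebra.adjoin ℂ Eset) = Submodule.span ℂ Eset := by
  rw [show Eset = (Emon : Set (BoundedContinuousFunction ℝ ℂ)) from rfl,
    Algebra.adjoin_eq_span, Submonoid.closure_eq]

lemma mem_adjoin_iff_span {g : BoundedContinuousFunction ℝ ℂ} :
    g ∈ Algebra.adjoin ℂ Eset ↔ g ∈ Submodule.span ℂ Eset := by
  rw [← adjoin_eq_span']; rfl

lemma mul_mem_spanW {g w : BoundedContinuousFunction ℝ ℂ}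
    (hg : g ∈ Submodule.span ℂ Eset) (hw : w ∈ Submodule.span ℂ Wset) :
    g * w ∈ Submodule.span ℂ Wset := by
  induction hg using Submodule.span_induction with
  | mem x hx =>
    obtain ⟨a, ha, rfl⟩ := hx
    induction hw using Submodule.span_induction with
    | mem y hy =>
      obtain ⟨b, hb, rfl⟩ := hy
      have ha' : (0:ℝ) ≤ a := ha
      exact Submodule.subset_span ⟨a + b, by linarith, (expB_add a b).symm⟩
    | zero => simpa using Submodule.zero_mem _
    | add y z _ _ hy hz => rw [mul_add]; exact Submodule.add_mem _ hy hz
    | smul c y _ hy => rw [mul_smul_comm]; exact Submodule.smul_mem _ _ hy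
  | zero => simpa using Submodule.zero_mem _
  | add x y _ _ hx hy => rw [add_mul]; exact Submodule.add_mem _ hx hy
  | smul c x _ hx => rw [smul_mul_assoc]; exact Submodule.smul_mem _ _ hx

noncomputable def Wcl : Submodule ℂ (BoundedContinuousFunction ℝ ℂ) :=
  (Submodule.span ℂ Wset).topologicalClosure

lemma mul_mem_Wcl {a x : BoundedContinuousFunction ℝ ℂ}
    (ha : a ∈ closure ((Submodule.span ℂ Eset : Submodule ℂ _) : Set (BoundedContinuousFunction ℝ ℂ)))
    (hx : x ∈ Wcl) : a * x ∈ Wcl := by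
  have hx' : x ∈ closure ((Submodule.span ℂ Wset : Submodule ℂ _) : Set (BoundedContinuousFunction ℝ ℂ)) := hx
  exact map_mem_closure₂ continuous_mul ha hx' (fun a ha b hb => mul_mem_spanW ha hb)

lemma mem_AAPalg_iff {a : BoundedContinuousFunction ℝ ℂ} :
    a ∈ AAPalg ↔ a ∈ closure ((Submodule.span ℂ Eset : Submodule ℂ _) :
      Set (BoundedContinuousFunction ℝ ℂ)) := by
  have h1 : a ∈ AAPalg ↔ a ∈ closure ((Algebra.adjoin ℂ Eset : Subalgebra ℂ _) :
      Set (BoundedContinuousFunction ℝ ℂ)) := Iff.rfl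
  rw [h1]
  have h2 : ((Algebra.adjoin ℂ Eset : Subalgebra ℂ _) : Set (BoundedContinuousFunction ℝ ℂ)) =
      ((Submodule.span ℂ Eset : Submodule ℂ _) : Set (BoundedContinuousFunction ℝ ℂ)) := by
    rw [← adjoin_eq_span']; rfl
  rw [h2]

lemma expB_mem {l : ℝ} (hl : 0 ≤ l) : expB l ∈ AAPalg :=
  subset_closure (Algebra.subset_adjoin ⟨l, hl, rfl⟩)

noncomputable def eB (l : ℝ) (hl : 0 ≤ l) : AAPalg := ⟨expB l, expB_mem hl⟩

@[simp] lemma eB_coe (l : ℝ) (hl : 0 ≤ l) : ((eB l hl : AAPalg) : BoundedContinuousFunction ℝ ℂ) = expB l := rfl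

section Jt
variable (t : ℝ)

noncomputable def Jt : Ideal AAPalg :=
  Ideal.span {x : AAPalg | ∃ l : ℝ, 0 < l ∧
    (x : BoundedContinuousFunction ℝ ℂ) = expB l - expB (l * Real.exp t)}

lemma gen_mem {l : ℝ} (hl : 0 < l) :
    eB l hl.le - eB (l * Real.exp t) (by positivity) ∈ Jt t :=
  Ideal.subset_span ⟨l, hl, rfl⟩

lemma step_mem {ν l : ℝ} (hν : 0 ≤ ν) (hl : 0 < l) :
    eB (l + ν) (by positivity) - eB (l * Real.exp t + ν) (by positivity) ∈ Jt t := by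
  have key : eB (l + ν) (by positivity) - eB (l * Real.exp t + ν) (by positivity)
      = eB ν hν * (eB l hl.le - eB (l * Real.exp t) (by positivity)) := by
    apply Subtype.ext
    push_cast
    simp only [eB_coe]
    rw [expB_add, expB_add]
    ring
  rw [key]
  exact Ideal.mul_mem_left _ _ (gen_mem t hl)

lemma pair_mem_aux (ht : 0 < t) (n : ℕ) : ∀ lam mu : ℝ, ∀ (h1 : 0 < lam) (h2 : lam ≤ mu),
    mu ≤ lam * Real.exp (n * t) →
    eB lam h1.le - eB mu (le_trans h1.le h2) ∈ Jt t := by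
  induction n with
  | zero =>
    intro lam mu h1 h2 h3
    simp only [Nat.cast_zero, zero_mul, Real.exp_zero, mul_one] at h3
    have : lam = mu := le_antisymm h2 h3
    subst this
    simp
  | succ n ih =>
    intro lam mu h1 h2 h3
    by_cases hcase : mu ≤ lam * Real.exp t
    · rcases eq_or_lt_of_le h2 with heq | hlt
      · subst heq; simp
      · have het : (1:ℝ) < Real.exp t := by
          rw [← Real.exp_zero]; exact Real.exp_lt_exp.2 ht
        set l := (mu - lam) / (Real.exp t - 1) with hldef
        have hlpos : 0 < l := div_pos (by linarith) (by linarith)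
        have hc : l * (Real.exp t - 1) = mu - lam :=
          div_mul_cancel₀ _ (by linarith)
        have hν : 0 ≤ lam - l := by nlinarith
        have e1 : l + (lam - l) = lam := by ring
        have e2 : l * Real.exp t + (lam - l) = mu := by nlinarith
        have hmem := step_mem t hν hlpos
        have heq : eB (l + (lam - l)) (by positivity) -
            eB (l * Real.exp t + (lam - l)) (by positivity) =
            eB lam h1.le - eB mu (le_trans h1.le h2) := by
          apply Subtype.ext
          push_cast
          simp only [eB_coe]
          rw [e1, e2]
        rw [heq] at hmem
        exact hmem
    · push_neg at hcase
      have hexp : 0 < Real.exp t := Real.exp_pos t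
      have h1' : 0 < lam * Real.exp t := by positivity
      have hstep := gen_mem t h1
      have hrest : eB (lam * Real.exp t) h1'.le - eB mu (le_trans h1'.le hcase.le) ∈ Jt t := by
        apply ih (lam * Real.exp t) mu h1' hcase.le
        calc mu ≤ lam * Real.exp ((n+1 : ℕ) * t) := h3
          _ = lam * Real.exp t * Real.exp (n * t) := by
              rw [mul_assoc, ← Real.exp_add]
              push_cast
              ring_nf
      have hsplit : eB lam h1.le - eB mu (le_trans h1.le h2) =
          (eB lam h1.le - eB (lam * Real.exp t) (by positivity)) +
          (eB (lam * Real.exp t) h1'.le - eB mu (le_trans h1'.le hcase.le)) := by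
        apply Subtype.ext
        push_cast
        ring
      rw [hsplit]
      exact Ideal.add_mem _ hstep hrest

lemma pair_mem (ht : 0 < t) {lam mu : ℝ} (h1 : 0 < lam) (h2 : 0 < mu) :
    eB lam h1.le - eB mu h2.le ∈ Jt t := by
  have main : ∀ a b : ℝ, ∀ (ha : 0 < a) (hb : a ≤ b),
      eB a ha.le - eB b (le_trans ha.le hb) ∈ Jt t := by
    intro a b ha hb
    obtain ⟨n, hn⟩ : ∃ n : ℕ, b / a ≤ Real.exp (n * t) := by
      refine ⟨⌈(b / a) / t⌉₊, ?_⟩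
      have h4 : (b / a) ≤ (⌈(b / a) / t⌉₊ : ℝ) * t := by
        rw [← div_le_iff₀ ht]
        exact Nat.le_ceil _
      calc b / a ≤ (⌈(b / a) / t⌉₊ : ℝ) * t := h4
        _ ≤ Real.exp ((⌈(b / a) / t⌉₊ : ℝ) * t) := by
            linarith [Real.add_one_le_exp ((⌈(b / a) / t⌉₊ : ℝ) * t)]
    exact pair_mem_aux t ht n a b ha hb (by rwa [div_le_iff₀ ha, mul_comm] at hn)
  rcases le_total lam mu with h | h
  · exact main lam mu h1 h
  · have := main mu lam h2 h
    have hneg := (Jt t).neg_mem this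
    simp only [neg_sub] at hneg
    exact hneg
end Jt

lemma J_sub (t : ℝ) {f : AAPalg} (hf : f ∈ Jt t) :
    (f : BoundedContinuousFunction ℝ ℂ) 0 = 0 ∧ (f : BoundedContinuousFunction ℝ ℂ) ∈ Wcl := by
  induction hf using Submodule.span_induction with
  | mem x hx =>
    obtain ⟨l, hl, hxe⟩ := hx
    constructor
    · rw [hxe]
      simp [expB_apply_zero]
    · rw [hxe]
      apply subset_closure
      exact Submodule.sub_mem _
        (Submodule.subset_span ⟨l, hl, rfl⟩)
        (Submodule.subset_span ⟨l * Real.exp t, by positivity, rfl⟩)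
  | zero =>
    refine ⟨by simp, ?_⟩
    push_cast
    exact Wcl.zero_mem
  | add x y _ _ hx hy =>
    constructor
    · push_cast
      rw [BoundedContinuousFunction.add_apply, hx.1, hy.1, add_zero]
    · push_cast
      exact Wcl.add_mem hx.2 hy.2
  | smul a x _ hx =>
    have hcoe : ((a • x : AAPalg) : BoundedContinuousFunction ℝ ℂ) =
        (a : BoundedContinuousFunction ℝ ℂ) * (x : BoundedContinuousFunction ℝ ℂ) := rfl
    constructor
    · rw [hcoe, BoundedContinuousFunction.mul_apply, hx.1, mul_zero]
    · rw [hcoe]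
      exact mul_mem_Wcl (mem_AAPalg_iff.1 a.2) hx.2

lemma decomp (t : ℝ) (ht : 0 < t) {g : BoundedContinuousFunction ℝ ℂ}
    (hg : g ∈ Submodule.span ℂ Eset) :
    ∃ (c₀ C : ℂ) (j : AAPalg), j ∈ Jt t ∧
      g = c₀ • (1 : BoundedContinuousFunction ℝ ℂ) + C • expB 1 +
        (j : BoundedContinuousFunction ℝ ℂ) := by
  induction hg using Submodule.span_induction with
  | mem x hx =>
    obtain ⟨l, hl, rfl⟩ := hx
    rcases eq_or_lt_of_le (by simpa using hl : (0:ℝ) ≤ l) with h0 | h0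
    · exact ⟨1, 0, 0, (Jt t).zero_mem, by simp [← h0, expB_zero]⟩
    · refine ⟨0, 1, eB l h0.le - eB 1 zero_le_one, pair_mem t ht h0 one_pos, ?_⟩
      push_cast
      simp only [eB_coe]
      simp
  | zero => exact ⟨0, 0, 0, (Jt t).zero_mem, by simp⟩
  | add x y _ _ hx hy =>
    obtain ⟨c₀, C, j, hj, hxe⟩ := hx
    obtain ⟨c₀', C', j', hj', hye⟩ := hy
    refine ⟨c₀ + c₀', C + C', j + j', (Jt t).add_mem hj hj', ?_⟩
    rw [hxe, hye]
    push_cast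
    module
  | smul c x _ hx =>
    obtain ⟨c₀, C, j, hj, hxe⟩ := hx
    refine ⟨c * c₀, c * C, c • j, ?_, ?_⟩
    · rw [Algebra.smul_def]
      exact Ideal.mul_mem_left _ _ hj
    · rw [hxe]
      push_cast
      module

/-- For `t > 0`, the closed ideal `J_t` of `AAP(ℝ)` generated by the functions
`e^{iλx} − e^{iλe^t x}` for `λ > 0` equals the ideal
`I_0 = {f ∈ AAP(ℝ) : f(0) = 0 and x_∞(f) = 0}`, where `x_∞(f)` is the Bohr mean
`lim_{T→∞} (1/2T) ∫_{-T}^{T} f`. -/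
theorem stmt18 (t : ℝ) (ht : 0 < t) :
    closure ((Ideal.span {x : AAPalg | ∃ l : ℝ, 0 < l ∧
        (x : BoundedContinuousFunction ℝ ℂ) = expB l - expB (l * Real.exp t)} :
      Ideal AAPalg) : Set AAPalg)
    = {f : AAPalg | (f : BoundedContinuousFunction ℝ ℂ) 0 = 0 ∧
        Tendsto (fun T : ℝ => (1 / (2 * T) : ℂ) *
            ∫ x in (-T)..T, (f : BoundedContinuousFunction ℝ ℂ) x)
          atTop (nhds 0)} := by
  show closure ((Jt t : Ideal AAPalg) : Set AAPalg) = _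
  apply Set.Subset.antisymm
  · -- ⊆
    have hCclosed : IsClosed {f : AAPalg | (f : BoundedContinuousFunction ℝ ℂ) 0 = 0 ∧
        (f : BoundedContinuousFunction ℝ ℂ) ∈ Wcl} := by
      have h1 : IsClosed {g : BoundedContinuousFunction ℝ ℂ | g 0 = 0} :=
        isClosed_eq (by continuity) continuous_const
      have h2 : IsClosed (Wcl : Set (BoundedContinuousFunction ℝ ℂ)) :=
        Submodule.isClosed_topologicalClosure _
      have : {f : AAPalg | (f : BoundedContinuousFunction ℝ ℂ) 0 = 0 ∧
          (f : BoundedContinuousFunction ℝ ℂ) ∈ Wcl} =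
          (fun f : AAPalg => (f : BoundedContinuousFunction ℝ ℂ)) ⁻¹'
            ({g | g 0 = 0} ∩ (Wcl : Set (BoundedContinuousFunction ℝ ℂ))) := rfl
      rw [this]
      exact (h1.inter h2).preimage continuous_subtype_val
    have hsub : ((Jt t : Ideal AAPalg) : Set AAPalg) ⊆ {f : AAPalg |
        (f : BoundedContinuousFunction ℝ ℂ) 0 = 0 ∧
        (f : BoundedContinuousFunction ℝ ℂ) ∈ Wcl} := fun f hf => J_sub t hf
    intro f hf
    have hfC := closure_minimal hsub hCclosed hf
    exact ⟨hfC.1, closure_W_tendsto hfC.2⟩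
  · -- ⊇
    rintro f ⟨hf0, hftend⟩
    have hftend' : Tendsto (fun T => A T (f : BoundedContinuousFunction ℝ ℂ)) atTop (nhds 0) :=
      hftend
    rw [Metric.mem_closure_iff]
    intro ε hε
    have hfc : (f : BoundedContinuousFunction ℝ ℂ) ∈
        closure ((Submodule.span ℂ Eset : Submodule ℂ _) :
          Set (BoundedContinuousFunction ℝ ℂ)) := mem_AAPalg_iff.1 f.2
    obtain ⟨g, hg, hdist⟩ := Metric.mem_closure_iff.1 hfc (ε/4) (by linarith)
    obtain ⟨c₀, C, j, hj, hge⟩ := decomp t ht hg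
    have hj0 := (J_sub t hj).1
    have hjW := (J_sub t hj).2
    -- Tendsto A T g → c₀
    have hAj : Tendsto (fun T => A T (j : BoundedContinuousFunction ℝ ℂ)) atTop (nhds 0) :=
      closure_W_tendsto hjW
    have hAe : Tendsto (fun T => A T (expB 1)) atTop (nhds 0) := tendsto_A_expB one_pos
    have hAg : Tendsto (fun T => A T g) atTop (nhds c₀) := by
      have hev : ∀ᶠ T in atTop, c₀ * A T 1 + C * A T (expB 1) +
          A T (j : BoundedContinuousFunction ℝ ℂ) = A T g := by
        filter_upwards [eventually_ne_atTop (0:ℝ)] with T hT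
        rw [hge, A_add, A_add, A_smul, A_smul]
      have : Tendsto (fun T => c₀ * A T 1 + C * A T (expB 1) +
          A T (j : BoundedContinuousFunction ℝ ℂ)) atTop (nhds (c₀ * 1 + C * 0 + 0)) := by
        have hA1 : Tendsto (fun T : ℝ => A T (1 : BoundedContinuousFunction ℝ ℂ))
            atTop (nhds 1) := by
          apply Tendsto.congr' (f₁ := fun _ => (1:ℂ))
          · filter_upwards [eventually_ne_atTop (0:ℝ)] with T hT
            exact (A_one hT).symm
          · exact tendsto_const_nhds
        exact ((tendsto_const_nhds.mul hA1).add (tendsto_const_nhds.mul hAe)).add hAj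
      simpa using this.congr' hev
    -- |c₀| ≤ ε/4
    have hc₀ : ‖c₀‖ ≤ ‖g - (f : BoundedContinuousFunction ℝ ℂ)‖ := by
      have hsub2 : Tendsto (fun T => A T (g - (f : BoundedContinuousFunction ℝ ℂ)))
          atTop (nhds c₀) := by
        have := hAg.sub hftend'
        simp only [sub_zero] at this
        apply this.congr
        intro T
        rw [A_sub]
      apply le_of_tendsto hsub2.norm
      filter_upwards [eventually_gt_atTop (0:ℝ)] with T hT
      exact norm_A_le hT _
    have hgf : ‖g - (f : BoundedContinuousFunction ℝ ℂ)‖ < ε/4 := by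
      rw [← dist_eq_norm, dist_comm]
      exact hdist
    -- |c₀ + C| < ε/4
    have hg0 : g 0 = c₀ + C := by
      rw [hge]
      simp [expB_apply_zero, hj0]
    have hcC : ‖c₀ + C‖ < ε/4 := by
      have : ‖g 0‖ ≤ ‖g - (f : BoundedContinuousFunction ℝ ℂ)‖ := by
        have := BoundedContinuousFunction.norm_coe_le_norm
          (g - (f : BoundedContinuousFunction ℝ ℂ)) 0
        simpa [hf0] using this
      rw [hg0] at this
      linarith
    have hC : ‖C‖ < ε/2 := by
      have : ‖C‖ ≤ ‖c₀ + C‖ + ‖c₀‖ := by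
        calc ‖C‖ = ‖(c₀ + C) - c₀‖ := by ring_nf
          _ ≤ ‖c₀ + C‖ + ‖c₀‖ := norm_sub_le _ _
      linarith
    refine ⟨j, hj, ?_⟩
    have hj_coe : (j : BoundedContinuousFunction ℝ ℂ) =
        g - c₀ • (1 : BoundedContinuousFunction ℝ ℂ) - C • expB 1 := by
      rw [hge]; ring
    rw [show dist f j = dist (f : BoundedContinuousFunction ℝ ℂ)
      (j : BoundedContinuousFunction ℝ ℂ) from rfl, dist_eq_norm, hj_coe]
    have heq : (f : BoundedContinuousFunction ℝ ℂ) -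
        (g - c₀ • (1 : BoundedContinuousFunction ℝ ℂ) - C • expB 1) =
        ((f : BoundedContinuousFunction ℝ ℂ) - g) + c₀ • 1 + C • expB 1 := by ring
    rw [heq]
    have h1 : ‖c₀ • (1:BoundedContinuousFunction ℝ ℂ)‖ ≤ ‖c₀‖ := by
      rw [norm_smul]
      calc ‖c₀‖ * ‖(1:BoundedContinuousFunction ℝ ℂ)‖ ≤ ‖c₀‖ * 1 := by
            gcongr; exact norm_one.le
        _ = ‖c₀‖ := mul_one _
    have h2 : ‖C • expB 1‖ ≤ ‖C‖ := by
      rw [norm_smul]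
      calc ‖C‖ * ‖expB 1‖ ≤ ‖C‖ * 1 := by gcongr; exact norm_expB_le 1
        _ = ‖C‖ := mul_one _
    have h3 : ‖(f : BoundedContinuousFunction ℝ ℂ) - g‖ < ε/4 := by
      rw [← dist_eq_norm]; exact hdist
    have h4 := norm_add₃_le (a := (f : BoundedContinuousFunction ℝ ℂ) - g)
      (b := c₀ • (1:BoundedContinuousFunction ℝ ℂ)) (c := C • expB 1)
    have hc₀' : ‖c₀‖ < ε/4 := lt_of_le_of_lt hc₀ hgf
    calc ‖((f : BoundedContinuousFunction ℝ ℂ) - g) + c₀ • 1 + C • expB 1‖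
        ≤ ‖(f : BoundedContinuousFunction ℝ ℂ) - g‖ + ‖c₀ • (1:BoundedContinuousFunction ℝ ℂ)‖ +
          ‖C • expB 1‖ := h4
      _ < ε := by linarith
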